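/- Let n, k with gcd(n, k+1) = 1 and let m be the unique integer 1 ≤ m < n with m(k+1) ≡ 1 (mod n). If an n-periodic sequence ξ and constant e satisfy e + ξ(i) - ξ(i-k-1) = a(i) for all i (with a n-periodic), then m·e + ξ(i) - ξ(i-1) = Σ_{j=0}^{m-1} a(i - j(k+1)) for all i ∈ ℤ. -/

import Mathlib

/-- Telescoping reduction of the order-`(k+1)` difference equation to an order-1 equation,
using the integer `m` with `m (k+1) ≡ 1 (mod n)`. -/
theorem telescoping_reduction (n k m : ℕ) (hcop : Nat.gcd n (k + 1) = 1)
    (hm1 : 1 ≤ m) (hm2 : m < n) (hmod : m * (k + 1) % n = 1 % n)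
    (a : ℤ → ℂ) (ha : ∀ i, a (i + n) = a i)
    (ξ : ℤ → ℂ) (hξ : ∀ i, ξ (i + n) = ξ i) (e : ℂ)
    (heq : ∀ i : ℤ, e + ξ i - ξ (i - (k + 1)) = a i) :
    ∀ i : ℤ, (m : ℂ) * e + ξ i - ξ (i - 1)
      = ∑ j ∈ Finset.range m, a (i - j * (k + 1)) := by
  intro i
  have hn2 : 2 ≤ n := by omega
  have h1n : 1 % n = 1 := Nat.mod_eq_of_lt (by omega)
  -- ξ is invariant under subtracting multiples of n
  have hper : ∀ (q : ℕ) (x : ℤ), ξ (x - n * q) = ξ x := by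
    intro q
    induction q with
    | zero => simp
    | succ q ih =>
      intro x
      have h0 := hξ (x - n * (q + 1))
      have h2 : x - (n : ℤ) * (q + 1) + n = x - n * q := by push_cast; ring
      rw [h2] at h0
      have h3 : x - (n : ℤ) * ((q : ℕ) + 1 : ℕ) = x - (n : ℤ) * ((q : ℤ) + 1) := by
        push_cast; ring
      rw [h3, ← h0, ih]
  set g : ℕ → ℂ := fun j => ξ (i - j * (k + 1)) with hg
  -- telescoping sum
  have key : ∑ j ∈ Finset.range m, a (i - j * (k + 1))
      = (m : ℂ) * e + g 0 - g m := by
    have hc : ∀ j ∈ Finset.range m, a (i - j * (k + 1))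
        = e + (g j - g (j + 1)) := by
      intro j _
      have h0 := heq (i - j * (k + 1))
      have h2 : i - (j : ℤ) * (k + 1) - (k + 1) = i - ((j + 1 : ℕ) : ℤ) * (k + 1) := by
        push_cast; ring
      rw [h2] at h0
      simp only [hg]
      linear_combination -h0
    rw [Finset.sum_congr rfl hc, Finset.sum_add_distrib, Finset.sum_const,
      Finset.card_range, Finset.sum_range_sub' g]
    push_cast
    ring
  -- g m = ξ (i - 1)
  have hq : m * (k + 1) = n * (m * (k + 1) / n) + 1 := by
    rw [h1n] at hmod
    have := Nat.div_add_mod (m * (k + 1)) n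
    omega
  have hfin : g m = ξ (i - 1) := by
    set q := m * (k + 1) / n with hqdef
    have h4 : (m : ℤ) * ((k : ℤ) + 1) = (n : ℤ) * (q : ℤ) + 1 := by exact_mod_cast hq
    have h3 : i - (m : ℤ) * (k + 1) = (i - 1) - (n : ℤ) * (q : ℤ) := by linarith
    simp only [hg]
    rw [h3, hper]
  rw [key, hfin]
  simp [hg]
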